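/- Let η ∈ (0,1) and N > 0. Then ∑_{n=0}^∞ ∑_{k=0}^{n} p(n,k) · [log₂((1−η)N+1) + k log₂(1 + 1/((1−η)N))] · [log₂(N+1) + n log₂(1 + 1/N)] = log₂((1−η)N+1) log₂(N+1) + N log₂((1−η)N+1) log₂(1 + 1/N) + (1−η)N log₂(1 + 1/((1−η)N)) log₂(N+1) + (1−η)N(2N+1) log₂(1 + 1/((1−η)N)) log₂(1 + 1/N), where the series converges. -/

import Mathlib

open Real

/-- The joint photon-number distribution
`p(n,k) = (1/(N+1)) (N/(N+1))^n C(n,k) (1−η)^k η^{n−k}` (it vanishes for `k > n`,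
since then `C(n,k) = 0`). -/
noncomputable def jointDist (η N : ℝ) (n k : ℕ) : ℝ :=
  (1 / (N + 1)) * (N / (N + 1)) ^ n * (n.choose k : ℝ) * (1 - η) ^ k * η ^ (n - k)

lemma sum_weighted_binomial (x y : ℝ) (n : ℕ) :
    ∑ k ∈ Finset.range (n + 1), (k : ℝ) * (n.choose k : ℝ) * x ^ k * y ^ (n - k)
      = n * x * (x + y) ^ (n - 1) := by
  cases n with
  | zero => simp
  | succ m =>
    rw [Finset.sum_range_succ']
    have h : ∀ i ∈ Finset.range (m + 1),
        ((i+1 : ℕ) : ℝ) * ((m+1).choose (i+1) : ℝ) * x ^ (i+1) * y ^ (m + 1 - (i+1))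
          = ((m+1 : ℕ) : ℝ) * x * ((m.choose i : ℝ) * x ^ i * y ^ (m - i)) := by
      intro i _
      have hc : (m+1) * m.choose i = (m+1).choose (i+1) * (i+1) := Nat.add_one_mul_choose_eq m i
      have hcn : (i+1) * (m+1).choose (i+1) = (m+1) * m.choose i := by
        rw [mul_comm]; exact hc.symm
      have hc' : ((i+1 : ℕ) : ℝ) * ((m+1).choose (i+1) : ℝ) = ((m+1 : ℕ) : ℝ) * (m.choose i : ℝ) := by
        exact_mod_cast congrArg (Nat.cast : ℕ → ℝ) hcn
      have hsub : m + 1 - (i + 1) = m - i := by omega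
      rw [hsub]
      calc ((i+1 : ℕ) : ℝ) * ((m+1).choose (i+1) : ℝ) * x ^ (i+1) * y ^ (m - i)
          = (((i+1 : ℕ) : ℝ) * ((m+1).choose (i+1) : ℝ)) * x ^ (i+1) * y ^ (m - i) := by ring
        _ = (((m+1 : ℕ) : ℝ) * (m.choose i : ℝ)) * x ^ (i+1) * y ^ (m - i) := by rw [hc']
        _ = ((m+1 : ℕ) : ℝ) * x * ((m.choose i : ℝ) * x ^ i * y ^ (m - i)) := by ring
    rw [Finset.sum_congr rfl h, ← Finset.mul_sum]
    rw [show ∑ i ∈ Finset.range (m+1), (m.choose i : ℝ) * x ^ i * y ^ (m - i)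
        = (x + y) ^ m from by
      rw [add_pow]; exact Finset.sum_congr rfl fun k _ => by ring]
    push_cast
    ring

lemma sum_binomial' (x y : ℝ) (n : ℕ) :
    ∑ k ∈ Finset.range (n + 1), (n.choose k : ℝ) * x ^ k * y ^ (n - k) = (x + y) ^ n := by
  rw [add_pow]; exact Finset.sum_congr rfl fun k _ => by ring

lemma choose_two_cast (n : ℕ) :
    (((n + 2).choose 2 : ℕ) : ℝ) = ((n : ℝ) + 2) * ((n : ℝ) + 1) / 2 := by
  induction n with
  | zero => norm_num
  | succ m ih =>
    have h : (m + 3).choose 2 = (m + 2).choose 1 + (m + 2).choose 2 :=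
      Nat.choose_succ_succ' (m + 2) 1
    rw [show m + 1 + 2 = m + 3 from rfl, h]
    push_cast
    push_cast at ih
    rw [ih]
    simp [Nat.choose_one_right]
    ring

lemma hasSum_sq_mul_geometric {r : ℝ} (hr : |r| < 1) :
    HasSum (fun n : ℕ => (n : ℝ) ^ 2 * r ^ n)
      (2 / (1 - r) ^ 3 - 3 * (r / (1 - r) ^ 2) - 2 * (1 / (1 - r))) := by
  have hr' : ‖r‖ < 1 := by rwa [Real.norm_eq_abs]
  have h1 : HasSum (fun n : ℕ => (((n + 2).choose 2 : ℕ) : ℝ) * r ^ n) (1 / (1 - r) ^ 3) := by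
    have := hasSum_choose_mul_geometric_of_norm_lt_one 2 hr'
    simpa using this
  have h2 := hasSum_coe_mul_geometric_of_norm_lt_one hr'
  have h3 := hasSum_geometric_of_norm_lt_one hr'
  have H := ((h1.mul_left 2).sub (h2.mul_left 3)).sub (h3.mul_left 2)
  convert H using 1
  · rfl
  · funext n
    rw [choose_two_cast n]
    ring
  · ring

/-- For `η ∈ (0,1)` and `N > 0`,
`∑ₙ ∑_{k≤n} p(n,k) [log₂((1−η)N+1) + k log₂(1+1/((1−η)N))] [log₂(N+1) + n log₂(1+1/N)]`
converges and equals the displayed four-term expression. -/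
theorem joint_log_cross_term (η N : ℝ) (hη : η ∈ Set.Ioo (0 : ℝ) 1) (hN : 0 < N) :
    HasSum
      (fun n : ℕ => ∑ k ∈ Finset.range (n + 1),
        jointDist η N n k *
          (Real.logb 2 ((1 - η) * N + 1) + (k : ℝ) * Real.logb 2 (1 + 1 / ((1 - η) * N))) *
          (Real.logb 2 (N + 1) + (n : ℝ) * Real.logb 2 (1 + 1 / N)))
      (Real.logb 2 ((1 - η) * N + 1) * Real.logb 2 (N + 1)
        + N * Real.logb 2 ((1 - η) * N + 1) * Real.logb 2 (1 + 1 / N)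
        + (1 - η) * N * Real.logb 2 (1 + 1 / ((1 - η) * N)) * Real.logb 2 (N + 1)
        + (1 - η) * N * (2 * N + 1) * Real.logb 2 (1 + 1 / ((1 - η) * N))
            * Real.logb 2 (1 + 1 / N)) := by
  obtain ⟨hη0, hη1⟩ := hη
  set A := Real.logb 2 ((1 - η) * N + 1) with hA
  set B := Real.logb 2 (1 + 1 / ((1 - η) * N)) with hB
  set C := Real.logb 2 (N + 1) with hC
  set D := Real.logb 2 (1 + 1 / N) with hD
  set r : ℝ := N / (N + 1) with hr
  set c : ℝ := 1 / (N + 1) with hc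
  have hN1 : (0 : ℝ) < N + 1 := by linarith
  have hr0 : 0 ≤ r := by positivity
  have hr1 : r < 1 := by
    rw [hr, div_lt_one hN1]; linarith
  have hrabs : |r| < 1 := by rw [abs_of_nonneg hr0]; exact hr1
  have hrnorm : ‖r‖ < 1 := by rwa [Real.norm_eq_abs]
  have h1mr : 1 - r = c := by
    rw [hr, hc]; field_simp; ring
  -- Key: the inner sum in closed form
  have key : ∀ n : ℕ,
      (∑ k ∈ Finset.range (n + 1), jointDist η N n k * (A + (k : ℝ) * B) * (C + (n : ℝ) * D))
        = (A * C * c) * r ^ n + ((A * D + (1 - η) * B * C) * c) * ((n : ℝ) * r ^ n)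
          + ((1 - η) * B * D * c) * ((n : ℝ) ^ 2 * r ^ n) := by
    intro n
    have S0 := sum_binomial' (1 - η) η n
    have S1 := sum_weighted_binomial (1 - η) η n
    have hone : (1 - η) + η = 1 := by ring
    rw [hone, one_pow] at S0
    rw [hone, one_pow] at S1
    have step : (∑ k ∈ Finset.range (n + 1),
          jointDist η N n k * (A + (k : ℝ) * B) * (C + (n : ℝ) * D))
        = (A * (c * r ^ n * (C + (n : ℝ) * D)))
            * (∑ k ∈ Finset.range (n + 1), (n.choose k : ℝ) * (1 - η) ^ k * η ^ (n - k))
          + (B * (c * r ^ n * (C + (n : ℝ) * D)))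
            * (∑ k ∈ Finset.range (n + 1), (k : ℝ) * (n.choose k : ℝ) * (1 - η) ^ k * η ^ (n - k)) := by
      rw [Finset.mul_sum, Finset.mul_sum, ← Finset.sum_add_distrib]
      refine Finset.sum_congr rfl fun k _ => ?_
      simp only [jointDist, hr, hc]
      ring
    rw [step, S0, S1]
    ring
  have hfun : (fun n : ℕ => ∑ k ∈ Finset.range (n + 1),
        jointDist η N n k * (A + (k : ℝ) * B) * (C + (n : ℝ) * D))
      = fun n : ℕ => (A * C * c) * r ^ n + ((A * D + (1 - η) * B * C) * c) * ((n : ℝ) * r ^ n)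
          + ((1 - η) * B * D * c) * ((n : ℝ) ^ 2 * r ^ n) := funext key
  rw [hfun]
  have hgeo : HasSum (fun n : ℕ => r ^ n) (1 / (1 - r)) := by
    simpa [one_div] using hasSum_geometric_of_lt_one hr0 hr1
  have hlin := hasSum_coe_mul_geometric_of_norm_lt_one hrnorm
  have hsq := hasSum_sq_mul_geometric hrabs
  have H := ((hgeo.mul_left (A * C * c)).add
      (hlin.mul_left ((A * D + (1 - η) * B * C) * c))).add
      (hsq.mul_left ((1 - η) * B * D * c))
  convert H using 1
  rfl
  have hN1' : N + 1 ≠ 0 := ne_of_gt hN1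
  rw [hr, hc]
  field_simp
  ring
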